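/- A system of polynomials (h_1, …, h_L) in 𝔽_q[t][u] satisfies Condition (⋆) if and only if there exists a polynomial d ∈ 𝔽_q[t][u] which has a root modulo g for every nonzero g ∈ 𝔽_q[t] (i.e., for every nonzero g ∈ 𝔽_q[t] there is m ∈ 𝔽_q[t] with d(m) ≡ 0 (mod g)) and which divides h_i in 𝔽_q[t][u] for every 1 ≤ i ≤ L. -/

import Mathlib

open Polynomial Classical

/-- Embedding of `F[t]` into `K_∞ = F((1/t))`, realized as Laurent series in `X = 1/t`
(so `t ↦ X⁻¹`, i.e. the single Hahn series with exponent `-1`). -/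
noncomputable def tEmbed (F : Type*) [Field F] : Polynomial F →+* LaurentSeries F :=
  (Polynomial.aeval (HahnSeries.single (-1 : ℤ) (1 : F))).toRingHom

/-- `ord` of an element of `K_∞` (in terms of `t`): the largest `t`-exponent, `⊥` if zero. -/
noncomputable def ordinf {F : Type*} [Field F] (α : LaurentSeries F) : EReal :=
  if α = 0 then ⊥ else (((-α.order : ℤ) : ℝ) : EReal)

/-- Fractional part `{α}`: the part with negative `t`-exponents (positive `X`-exponents). -/
noncomputable def fracPart {F : Type*} [Field F] (α : LaurentSeries F) : LaurentSeries F :=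
  { coeff := fun i => if 1 ≤ i then α.coeff i else 0,
    isPWO_support' := α.isPWO_support'.mono (fun i hi => by
      by_cases h : (1:ℤ) ≤ i <;> simp only [Function.mem_support, h, if_true, if_false] at hi ⊢ <;>
        first | exact hi | exact absurd rfl hi) }

/-- `res α`: the coefficient of `t⁻¹` in `α`. -/
noncomputable def res {F : Type*} [Field F] (α : LaurentSeries F) : F := α.coeff 1

/-- A polynomial is supported on `K ⊆ ℤ⁺` if its nonconstant coefficients are nonzero
exactly at the exponents in `K`. -/
def SupportedOn {R : Type*} [Semiring R] (h : Polynomial R) (K : Set ℕ) : Prop :=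
  (∀ k ∈ K, 0 < k) ∧ ∀ r : ℕ, 0 < r → (h.coeff r ≠ 0 ↔ r ∈ K)

/-- The shadow `S(K)` of `K ⊆ ℤ⁺`: positive integers `j` with `j ≼_p r` for some `r ∈ K`. -/
def Shadow (p : ℕ) (K : Set ℕ) : Set ℕ :=
  {j | 0 < j ∧ ∃ r ∈ K, ¬ p ∣ Nat.choose r j}

/-- `K* = {k ∈ K : p ∤ k and pᵛk ∉ S(K) for all v ≥ 1}`. -/
def Kstar (p : ℕ) (K : Set ℕ) : Set ℕ :=
  {k | k ∈ K ∧ ¬ p ∣ k ∧ ∀ v : ℕ, 0 < v → p ^ v * k ∉ Shadow p K}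

/-- `k` is maximal in `K` with respect to the partial order `≼_p`. -/
def MaximalIn (p : ℕ) (K : Set ℕ) (k : ℕ) : Prop :=
  k ∈ K ∧ ∀ r ∈ K, ¬ p ∣ Nat.choose r k → r = k

/-- The part of a polynomial consisting of the monomials with exponents in `S`. -/
noncomputable def portion {R : Type*} [Semiring R] (h : Polynomial R) (S : Set ℕ) :
    Polynomial R :=
  ∑ r ∈ h.support, if r ∈ S then Polynomial.C (h.coeff r) * Polynomial.X ^ r else 0

/-- The polynomial of degree `< N` with coefficient vector `c`. -/
noncomputable def polyOf {F : Type*} [Semiring F] (N : ℕ) (c : Fin N → F) : Polynomial F :=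
  ∑ i : Fin N, Polynomial.C (c i) * Polynomial.X ^ (i : ℕ)

/-- `ord` of a polynomial in `F[t]`, i.e. its degree, with `⊥` for `0`. -/
noncomputable def pOrd {F : Type*} [Field F] (x : Polynomial F) : EReal :=
  if x = 0 then ⊥ else ((x.natDegree : ℝ) : EReal)


section AuxCD

open Polynomial

variable {F : Type*} [Field F]

/-- Bezout with denominators: if a finite family in `F[t][u]` has gcd `1`, then some
`F[t][u]`-combination of them equals a nonzero constant `C c` with `c ∈ F[t]`. -/
private lemma bezout_aux {L : ℕ} (e : Fin L → Polynomial (Polynomial F))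
    (hg : (Finset.univ : Finset (Fin L)).gcd e = 1) :
    ∃ (v : Fin L → Polynomial (Polynomial F)) (c : Polynomial F),
      c ≠ 0 ∧ ∑ i, v i * e i = Polynomial.C c := by
  classical
  set R := Polynomial F
  let K := FractionRing R
  let φ : R →+* K := algebraMap R K
  have hφ : Function.Injective φ := IsFractionRing.injective R K
  have hmapinj : Function.Injective (Polynomial.map φ) := Polynomial.map_injective φ hφ
  -- some `e i` is nonzero
  have hne : ∃ i0 : Fin L, e i0 ≠ 0 := by
    by_contra hall
    push_neg at hall
    have : (Finset.univ : Finset (Fin L)).gcd e = 0 :=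
      Finset.gcd_eq_zero_iff.mpr fun i _ => hall i
    rw [hg] at this
    exact one_ne_zero this
  obtain ⟨i0, hi0⟩ := hne
  -- the ideal generated by the images in `K[u]`
  set I : Ideal (Polynomial K) :=
    Ideal.span (Set.range fun i => (e i).map φ) with hI
  obtain ⟨p, hp⟩ := (IsPrincipalIdealRing.principal I).principal
  have hmem : ∀ i, (e i).map φ ∈ I := fun i =>
    Ideal.subset_span ⟨i, rfl⟩
  have hpdvd : ∀ i, p ∣ (e i).map φ := fun i => by
    have := hmem i
    rw [hp, Ideal.submodule_span_eq, Ideal.mem_span_singleton] at this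
    exact this
  have hp0 : p ≠ 0 := by
    intro h0
    obtain ⟨r, hr⟩ := hpdvd i0
    rw [h0, zero_mul] at hr
    exact hi0 (hmapinj (by simpa using hr))
  have hpu : IsUnit p := by
    by_contra hpu
    -- clear denominators of `p` and take the primitive part
    obtain ⟨b, hb⟩ := IsLocalization.integerNormalization_map_to_map
      (nonZeroDivisors R) p
    set q0 : Polynomial R := IsLocalization.integerNormalization (nonZeroDivisors R) p with hq0def
    have hbne : φ (b : R) ≠ 0 := fun h =>
      nonZeroDivisors.coe_ne_zero b (hφ (by simpa using h))
    have hb' : q0.map φ = Polynomial.C (φ (b : R)) * p := by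
      rw [hb, Algebra.smul_def, Polynomial.algebraMap_apply]
    have hq00 : q0 ≠ 0 := by
      intro h0
      rw [h0, Polynomial.map_zero] at hb'
      exact hp0 (by
        rcases mul_eq_zero.mp hb'.symm with h | h
        · exact absurd h (by simpa [Polynomial.C_eq_zero] using hbne)
        · exact h)
    set q : Polynomial R := q0.primPart with hqdef
    have hqprim : q.IsPrimitive := q0.isPrimitive_primPart
    have hcont : φ q0.content ≠ 0 := fun h =>
      hq00 (Polynomial.content_eq_zero_iff.mp (hφ (by simpa using h)))
    have hkey : Polynomial.C (φ (b : R)) * p = Polynomial.C (φ q0.content) * q.map φ := by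
      rw [← hb']
      conv_lhs => rw [q0.eq_C_content_mul_primPart]
      rw [Polynomial.map_mul, Polynomial.map_C]
    have hbunit : IsUnit (Polynomial.C (φ (b : R))) :=
      Polynomial.isUnit_C.mpr (isUnit_iff_ne_zero.mpr hbne)
    have hcunit : IsUnit (Polynomial.C (φ q0.content)) :=
      Polynomial.isUnit_C.mpr (isUnit_iff_ne_zero.mpr hcont)
    -- `q` divides every `e i`
    have hqdvd : ∀ i, q ∣ e i := by
      intro i
      by_cases hei : e i = 0
      · simp [hei]
      have h1 : q.map φ ∣ (e i).map φ := by
        have h2 : q.map φ ∣ Polynomial.C (φ (b : R)) * p :=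
          hkey ▸ Dvd.intro_left _ rfl
        exact ((hbunit.dvd_mul_left).mp h2).trans (hpdvd i)
      have h3 : q.map φ ∣ ((e i).primPart).map φ := by
        have heq : (e i).map φ = Polynomial.C (φ (e i).content) * ((e i).primPart).map φ := by
          conv_lhs => rw [(e i).eq_C_content_mul_primPart]
          rw [Polynomial.map_mul, Polynomial.map_C]
        have hcu : IsUnit (Polynomial.C (φ (e i).content)) :=
          Polynomial.isUnit_C.mpr (isUnit_iff_ne_zero.mpr fun h =>
            hei (Polynomial.content_eq_zero_iff.mp (hφ (by simpa using h))))
        rw [heq] at h1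
        exact (hcu.dvd_mul_left).mp h1
      have h4 : q ∣ (e i).primPart :=
        hqprim.dvd_of_fraction_map_dvd_fraction_map h3
      exact h4.trans ((e i).primPart_dvd)
    have hq1 : q ∣ 1 := by
      rw [← hg]
      exact Finset.dvd_gcd fun i _ => hqdvd i
    have hqu : IsUnit q := isUnit_of_dvd_one hq1
    have hqmu : IsUnit (q.map φ) := hqu.map (Polynomial.mapRingHom φ)
    have : IsUnit (Polynomial.C (φ (b : R)) * p) := hkey ▸ hcunit.mul hqmu
    exact hpu (isUnit_of_mul_isUnit_right this)
  -- hence the ideal is everything and `1` is a combination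
  have hItop : I = ⊤ := by
    rw [hp, Ideal.submodule_span_eq, Ideal.span_singleton_eq_top]
    exact hpu
  have h1mem : (1 : Polynomial K) ∈ I := hItop ▸ Submodule.mem_top
  rw [hI, Ideal.mem_span_range_iff_exists_fun] at h1mem
  obtain ⟨u, hu⟩ := h1mem
  -- clear denominators of the `u i`
  have hbs : ∀ i : Fin L, ∃ b : nonZeroDivisors R,
      (IsLocalization.integerNormalization (nonZeroDivisors R) (u i)).map φ = (b : R) • u i :=
    fun i => IsLocalization.integerNormalization_map_to_map (nonZeroDivisors R) (u i)
  choose b hbspec using hbs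
  set w : Fin L → Polynomial R :=
    fun i => IsLocalization.integerNormalization (nonZeroDivisors R) (u i) with hwdef
  set c : R := ∏ i, (b i : R) with hcdef
  have hc0 : c ≠ 0 := by
    rw [hcdef]
    exact Finset.prod_ne_zero_iff.mpr fun i _ => nonZeroDivisors.coe_ne_zero (b i)
  refine ⟨fun i => Polynomial.C ((Finset.univ.erase i).prod fun j => (b j : R)) * w i, c,
    hc0, hmapinj ?_⟩
  have hsmul : ∀ i, (w i).map φ = Polynomial.C (φ (b i : R)) * u i := by
    intro i
    rw [hbspec i, Algebra.smul_def, Polynomial.algebraMap_apply]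
  calc (∑ i, Polynomial.C ((Finset.univ.erase i).prod fun j => (b j : R)) * w i * e i).map φ
      = ∑ i, Polynomial.C (φ c) * (u i * (e i).map φ) := by
        rw [Polynomial.map_sum]
        refine Finset.sum_congr rfl fun i _ => ?_
        rw [Polynomial.map_mul, Polynomial.map_mul, Polynomial.map_C, hsmul i, ← mul_assoc,
          ← Polynomial.C_mul, ← map_mul φ, Finset.prod_erase_mul _ _ (Finset.mem_univ i)]
        ring
    _ = Polynomial.C (φ c) := by rw [← Finset.mul_sum, hu, mul_one]
    _ = (Polynomial.C c).map φ := by rw [Polynomial.map_C]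

/-- Key step: if the system `fun i => d * e i` is jointly intersective and some combination
`∑ v i * e i` equals a nonzero constant `C c`, then `d` has roots modulo all prime powers. -/
private lemma prime_pow_step {L : ℕ} (d : Polynomial (Polynomial F))
    (e v : Fin L → Polynomial (Polynomial F)) (c : Polynomial F) (hc0 : c ≠ 0)
    (hvc : ∑ i, v i * e i = Polynomial.C c)
    (H : ∀ g : Polynomial F, g ≠ 0 → ∃ m : Polynomial F, ∀ i, g ∣ (d * e i).eval m)
    {π : Polynomial F} (hπ : Prime π) (k : ℕ) :
    ∃ m : Polynomial F, π ^ k ∣ d.eval m := by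
  classical
  set N := c.natDegree with hN
  obtain ⟨m, hm⟩ := H (π ^ (k + N)) (pow_ne_zero _ hπ.ne_zero)
  refine ⟨m, ?_⟩
  by_cases hd0 : d.eval m = 0
  · simp [hd0]
  by_contra hnd
  -- let `j < k` be the exact power of `π` in `d.eval m`
  set P : ℕ → Prop := fun n => π ^ n ∣ d.eval m with hPdef
  set j : ℕ := Nat.findGreatest P k with hjdef
  have hPj : P j := Nat.findGreatest_spec (Nat.zero_le k) (by simp [hPdef])
  have hjle : j ≤ k := Nat.findGreatest_le k
  have hjlt : j < k := lt_of_le_of_ne hjle (fun h => hnd (h ▸ hPj))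
  have hPj1 : ¬ P (j + 1) :=
    Nat.findGreatest_is_greatest (Nat.lt_succ_self j) hjlt
  obtain ⟨w, hw⟩ := hPj
  have hπw : ¬ π ∣ w := by
    rintro ⟨z, hz⟩
    exact hPj1 ⟨z, by rw [hw, hz]; ring⟩
  -- each `e i` is divisible by `π ^ (N + 1)` at `m`
  have hei : ∀ i, π ^ (N + 1) ∣ (e i).eval m := by
    intro i
    have h1 : π ^ (k + N) ∣ π ^ j * (w * (e i).eval m) := by
      have h0 := hm i
      rw [Polynomial.eval_mul, hw] at h0
      rw [← mul_assoc]
      exact h0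
    have h2 : π ^ (k + N) = π ^ j * π ^ (k + N - j) := by
      rw [← pow_add]
      congr 1
      omega
    rw [h2, mul_dvd_mul_iff_left (pow_ne_zero j hπ.ne_zero)] at h1
    have h3 : π ^ (k + N - j) ∣ (e i).eval m :=
      hπ.pow_dvd_of_dvd_mul_left _ hπw h1
    exact (pow_dvd_pow π (by omega)).trans h3
  -- hence `π ^ (N + 1) ∣ c`, contradicting `natDegree c = N`
  have hsum : π ^ (N + 1) ∣ c := by
    have hevalc : (∑ i, v i * e i).eval m = c := by rw [hvc, Polynomial.eval_C]
    rw [← hevalc, Polynomial.eval_finset_sum]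
    exact Finset.dvd_sum fun i _ => by
      rw [Polynomial.eval_mul]
      exact Dvd.dvd.mul_left (hei i) _
  have hπdeg : 1 ≤ π.natDegree := by
    by_contra hcon
    push_neg at hcon
    have hπd : π.natDegree = 0 := by omega
    obtain ⟨a, ha⟩ := Polynomial.natDegree_eq_zero.mp hπd
    rcases eq_or_ne a 0 with rfl | ha0
    · exact hπ.ne_zero (by simp [← ha])
    · exact hπ.not_unit (ha ▸ Polynomial.isUnit_C.mpr (isUnit_iff_ne_zero.mpr ha0))
  have hdeg := Polynomial.natDegree_le_of_dvd hsum hc0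
  rw [Polynomial.natDegree_pow] at hdeg
  nlinarith [hπdeg, hdeg]

end AuxCD

/-- **Lemma (jointly intersective systems have a single intersective common divisor).** -/
theorem stmt3 (q : ℕ) (F : Type*) [Field F] [Fintype F] (hcard : Fintype.card F = q)
    (L : ℕ) (h : Fin L → Polynomial (Polynomial F)) :
    (∀ g : Polynomial F, g ≠ 0 → ∃ m : Polynomial F, ∀ i, g ∣ (h i).eval m) ↔
      ∃ d : Polynomial (Polynomial F),
        (∀ g : Polynomial F, g ≠ 0 → ∃ m : Polynomial F, g ∣ d.eval m) ∧
        ∀ i, d ∣ h i := by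
  classical
  constructor
  · intro H
    rcases Nat.eq_zero_or_pos L with hL | hL
    · subst hL
      exact ⟨Polynomial.X, fun g hg => ⟨g, by simp⟩, fun i => i.elim0⟩
    haveI : Nonempty (Fin L) := ⟨⟨0, hL⟩⟩
    obtain ⟨e, he, hge⟩ := Finset.extract_gcd h (Finset.univ_nonempty)
    set d := (Finset.univ : Finset (Fin L)).gcd h with hd
    obtain ⟨v, c, hc0, hvc⟩ := bezout_aux e hge
    have Hde : ∀ g : Polynomial F, g ≠ 0 → ∃ m : Polynomial F, ∀ i, g ∣ (d * e i).eval m := by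
      intro g hg
      obtain ⟨m, hm⟩ := H g hg
      exact ⟨m, fun i => by rw [← he i (Finset.mem_univ i)]; exact hm i⟩
    refine ⟨d, ?_, fun i => Finset.gcd_dvd (Finset.mem_univ i)⟩
    intro g
    induction g using UniqueFactorizationMonoid.induction_on_coprime with
    | h0 => exact fun hg => absurd rfl hg
    | h1 hx => exact fun _ => ⟨0, hx.dvd⟩
    | hpr k hp => exact fun _ => prime_pow_step d e v c hc0 hvc Hde hp k
    | hcp hrel hx hy =>
      rename_i x y
      intro hg
      have hx0 : x ≠ 0 := left_ne_zero_of_mul hg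
      have hy0 : y ≠ 0 := right_ne_zero_of_mul hg
      obtain ⟨m1, hm1⟩ := hx hx0
      obtain ⟨m2, hm2⟩ := hy hy0
      have hco : IsCoprime x y := hrel.isCoprime
      obtain ⟨a, b, hab⟩ := hco
      refine ⟨m2 * (a * x) + m1 * (b * y), ?_⟩
      set m := m2 * (a * x) + m1 * (b * y) with hmdef
      have hxm : x ∣ Polynomial.eval m d := by
        have h1 : m - m1 = (m2 - m1) * a * x := by
          rw [hmdef]; linear_combination m1 * hab
        have h2 : x ∣ Polynomial.eval m d - Polynomial.eval m1 d :=
          Dvd.dvd.trans ⟨(m2 - m1) * a, by rw [h1]; ring⟩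
            (Polynomial.sub_dvd_eval_sub m m1 d)
        have h3 := dvd_add h2 hm1
        simpa using h3
      have hym : y ∣ Polynomial.eval m d := by
        have h1 : m - m2 = (m1 - m2) * b * y := by
          rw [hmdef]; linear_combination m2 * hab
        have h2 : y ∣ Polynomial.eval m d - Polynomial.eval m2 d :=
          Dvd.dvd.trans ⟨(m1 - m2) * b, by rw [h1]; ring⟩
            (Polynomial.sub_dvd_eval_sub m m2 d)
        have h3 := dvd_add h2 hm2
        simpa using h3
      exact (IsCoprime.mul_dvd ⟨a, b, hab⟩ hxm hym)
  · rintro ⟨d, hint, hdvd⟩ g hg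
    obtain ⟨m, hm⟩ := hint g hg
    exact ⟨m, fun i => hm.trans (Polynomial.eval_dvd (hdvd i))⟩
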